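/- Let (S_n) be a simple random walk on ℤ with transition probability function p satisfying 0 < p(k) < 1 for all k and p(k) → p₊ ∈ (0,1) as k → +∞. Then the sequence of empirical measures ℓ_n = (1/n)∑_{j=1}^n δ_{S_j}, viewed in P(ℤ) with the weak topology, is not exponentially tight: for every compact K ⊆ P(ℤ), lim inf_{n→∞} (1/n) log P(ℓ_n ∉ K) ≥ log p₊ > −∞. -/

import Mathlib

open MeasureTheory Filter

open scoped NNReal ENNReal

/-- The indicator of a singleton in `ℤ` as a bounded continuous `ℝ≥0`-valued function. -/
noncomputable def indicatorBCF (x : ℤ) : BoundedContinuousFunction ℤ ℝ≥0 :=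
  ⟨⟨Set.indicator {x} 1, continuous_of_discreteTopology⟩, 1, by
    intro a b
    have h1 : ∀ c : ℤ, Set.indicator ({x} : Set ℤ) (1 : ℤ → ℝ≥0) c ≤ 1 := by
      intro c
      by_cases hc : c ∈ ({x} : Set ℤ) <;> simp [Set.indicator_apply, hc]
    rw [NNReal.dist_eq]
    have ha := h1 a; have hb := h1 b
    have ha' : ((Set.indicator ({x} : Set ℤ) (1 : ℤ → ℝ≥0) a : ℝ≥0) : ℝ) ≤ 1 := by
      exact_mod_cast ha
    have hb' : ((Set.indicator ({x} : Set ℤ) (1 : ℤ → ℝ≥0) b : ℝ≥0) : ℝ) ≤ 1 := by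
      exact_mod_cast hb
    have ha0 : (0:ℝ) ≤ ((Set.indicator ({x} : Set ℤ) (1 : ℤ → ℝ≥0) a : ℝ≥0) : ℝ) := by positivity
    have hb0 : (0:ℝ) ≤ ((Set.indicator ({x} : Set ℤ) (1 : ℤ → ℝ≥0) b : ℝ≥0) : ℝ) := by positivity
    rw [abs_sub_le_iff]
    constructor <;> simp only [ContinuousMap.coe_mk] <;> linarith⟩

lemma lintegral_indicatorBCF (μ : Measure ℤ) (x : ℤ) :
    ∫⁻ y, ((indicatorBCF x) y : ℝ≥0∞) ∂μ = μ {x} := by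
  have h : (fun y => ((indicatorBCF x) y : ℝ≥0∞))
      = Set.indicator ({x} : Set ℤ) (fun _ => (1 : ℝ≥0∞)) := by
    funext y
    show ((Set.indicator ({x} : Set ℤ) (1 : ℤ → ℝ≥0) y : ℝ≥0) : ℝ≥0∞)
      = Set.indicator ({x} : Set ℤ) (fun _ => (1 : ℝ≥0∞)) y
    by_cases hy : y ∈ ({x} : Set ℤ) <;> simp [Set.indicator_apply, hy]
  rw [h, lintegral_indicator (measurableSet_singleton x)]
  simp

lemma continuous_probApply_singleton (x : ℤ) :
    Continuous (fun ν : ProbabilityMeasure ℤ => ν ({x} : Set ℤ)) := by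
  have key : ∀ ν : ProbabilityMeasure ℤ,
      ν ({x} : Set ℤ) = ν.toFiniteMeasure.testAgainstNN (indicatorBCF x) := by
    intro ν
    rw [FiniteMeasure.testAgainstNN]
    rw [ProbabilityMeasure.toMeasure_comp_toFiniteMeasure_eq_toMeasure,
      lintegral_indicatorBCF]
    rw [← ProbabilityMeasure.ennreal_coeFn_eq_coeFn_toMeasure, ENNReal.toNNReal_coe]
  simp_rw [key]
  exact ProbabilityMeasure.continuous_testAgainstNN_eval (indicatorBCF x)

lemma exists_atom_prob (ν : ProbabilityMeasure ℤ) : ∃ x : ℤ, 0 < ν ({x} : Set ℤ) := by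
  by_contra h
  push_neg at h
  have h0 : ∀ x : ℤ, (ν : Measure ℤ) {x} = 0 := by
    intro x
    have hx : ν ({x} : Set ℤ) = 0 := le_antisymm (h x) zero_le
    rw [← ProbabilityMeasure.ennreal_coeFn_eq_coeFn_toMeasure, hx, ENNReal.coe_zero]
  have huniv : (ν : Measure ℤ) Set.univ = 0 := by
    have : (Set.univ : Set ℤ) = ⋃ x : ℤ, {x} := by
      ext y; simp
    rw [this]
    exact measure_iUnion_null h0
  simp [measure_univ] at huniv

lemma exists_eps_of_compact (K : Set (ProbabilityMeasure ℤ)) (hK : IsCompact K) :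
    ∃ ε : ℝ≥0, 0 < ε ∧ ∀ ν ∈ K, ∃ x : ℤ, ε < ν ({x} : Set ℤ) := by
  choose x hx using exists_atom_prob
  set U : ProbabilityMeasure ℤ → Set (ProbabilityMeasure ℤ) :=
    fun ν => {μ | ν ({x ν} : Set ℤ) / 2 < μ ({x ν} : Set ℤ)} with hU
  have hUopen : ∀ ν, IsOpen (U ν) := by
    intro ν
    exact isOpen_Ioi.preimage (continuous_probApply_singleton (x ν))
  have hmem : ∀ ν, ν ∈ U ν := by
    intro ν
    exact NNReal.half_lt_self (ne_of_gt (hx ν))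
  obtain ⟨t, ht⟩ := hK.elim_finite_subcover U hUopen
    (fun ν hν => Set.mem_iUnion.mpr ⟨ν, hmem ν⟩)
  rcases t.eq_empty_or_nonempty with hte | htne
  · refine ⟨1, one_pos, fun ν hν => absurd (ht hν) ?_⟩
    simp [hte]
  · refine ⟨t.inf' htne (fun ν => ν ({x ν} : Set ℤ) / 2), ?_, ?_⟩
    · rw [Finset.lt_inf'_iff]
      intro ν _
      exact div_pos (hx ν) two_pos
    · intro ν hν
      obtain ⟨i, hit, hiU⟩ := Set.mem_iUnion₂.mp (ht hν)
      exact ⟨x i, lt_of_le_of_lt (Finset.inf'_le _ hit) hiU⟩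

/-- The empirical measure `ℓ_n = (1/n) ∑_{j=1}^n δ_{S_j}` of the process `S`,
as a measure on `ℤ`. -/
noncomputable def empiricalMeasure {Ω : Type*} (S : ℕ → Ω → ℤ) (n : ℕ) (ω : Ω) :
    Measure ℤ :=
  ((n : ENNReal))⁻¹ • ∑ j ∈ Finset.Icc 1 n, Measure.dirac (S j ω)

/-- No exponential tightness of the empirical measures of a spatially inhomogeneous simple
random walk on `ℤ` (with the topology of weak convergence on `P(ℤ)`): for every compact
`K ⊆ P(ℤ)`, `lim inf (1/n) log P(ℓ_n ∉ K) ≥ log p₊`. -/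
theorem no_exponential_tightness
    {Ω : Type*} [MeasurableSpace Ω] (P : Measure Ω) [IsProbabilityMeasure P]
    (p : ℤ → ℝ) (hp : ∀ k, p k ∈ Set.Ioo (0 : ℝ) 1)
    (pplus : ℝ) (hpplus : pplus ∈ Set.Ioo (0 : ℝ) 1)
    (hlim : Tendsto p atTop (nhds pplus))
    (S : ℕ → Ω → ℤ)
    (hpath : ∀ n : ℕ, 1 ≤ n → ∀ w : ℕ → ℤ, w 1 = 0 →
      (∀ j, 1 ≤ j → j < n → (w (j + 1) - w j = 1 ∨ w (j + 1) - w j = -1)) →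
      P {ω | ∀ j, 1 ≤ j → j ≤ n → S j ω = w j}
        = ENNReal.ofReal (∏ j ∈ Finset.Ico 1 n,
            if w (j + 1) = w j + 1 then p (w j) else 1 - p (w j))) :
    ∀ K : Set (ProbabilityMeasure ℤ), IsCompact K →
      Real.log pplus ≤ atTop.liminf (fun n : ℕ => (1 / (n : ℝ)) *
        Real.log (P {ω | ∀ ν : ProbabilityMeasure ℤ, ν ∈ K →
          (ν : Measure ℤ) ≠ empiricalMeasure S n ω}).toReal) := by
  intro K hK
  obtain ⟨ε, hε, hKε⟩ := exists_eps_of_compact K hK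
  obtain ⟨N, hN⟩ := exists_nat_gt (ε⁻¹ : ℝ≥0)
  set u : ℕ → ℝ := fun j => Real.log (p ((j : ℤ) - 1)) with hu_def
  set g : ℕ → ℝ := fun n => (1 / (n : ℝ)) * ∑ j ∈ Finset.Ico 1 n, u j with hg_def
  set f : ℕ → ℝ := fun n : ℕ => (1 / (n : ℝ)) *
        Real.log (P {ω | ∀ ν : ProbabilityMeasure ℤ, ν ∈ K →
          (ν : Measure ℤ) ≠ empiricalMeasure S n ω}).toReal with hf_def
  -- Cesàro convergence of g
  have hu : Tendsto u atTop (nhds (Real.log pplus)) := by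
    have h1 : Tendsto (fun j : ℕ => ((j : ℤ) - 1)) atTop atTop := by
      have := tendsto_atTop_add_const_right atTop (-1 : ℤ) tendsto_natCast_atTop_atTop
      simpa [sub_eq_add_neg] using this
    exact ((Real.continuousAt_log (ne_of_gt hpplus.1)).tendsto).comp (hlim.comp h1)
  have hg : Tendsto g atTop (nhds (Real.log pplus)) := by
    have hc := hu.cesaro
    have hz : Tendsto (fun n : ℕ => (n : ℝ)⁻¹ * u 0) atTop (nhds 0) := by
      simpa using (tendsto_inv_atTop_nhds_zero_nat (𝕜 := ℝ)).mul_const (u 0)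
    have hsub := hc.sub hz
    rw [sub_zero] at hsub
    apply hsub.congr'
    filter_upwards [eventually_ge_atTop 1] with n hn
    have hsplit : ∑ i ∈ Finset.range n, u i = u 0 + ∑ j ∈ Finset.Ico 1 n, u j := by
      rw [Finset.range_eq_Ico, Finset.sum_eq_sum_Ico_succ_bot hn]
    rw [hsplit]
    simp only [hg_def, one_div]
    ring
  -- the eventual lower bound on f
  have hbound : ∀ n : ℕ, N + 1 ≤ n → g n ≤ f n := by
    intro n hn
    have hn1 : 1 ≤ n := le_trans (Nat.le_add_left 1 N) hn
    -- probability of the increasing path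
    have hprob : P {ω | ∀ j, 1 ≤ j → j ≤ n → S j ω = (j : ℤ) - 1}
        = ENNReal.ofReal (∏ j ∈ Finset.Ico 1 n, p ((j : ℤ) - 1)) := by
      have hw := hpath n hn1 (fun j => (j : ℤ) - 1) (by norm_num)
        (fun j hj1 hjn => Or.inl (by push_cast; ring))
      rw [hw]
      congr 1
      refine Finset.prod_congr rfl fun j hj => ?_
      rw [if_pos (by push_cast; ring)]
    -- the path event is contained in the target event
    have hsub : {ω | ∀ j, 1 ≤ j → j ≤ n → S j ω = (j : ℤ) - 1}
        ⊆ {ω | ∀ ν : ProbabilityMeasure ℤ, ν ∈ K →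
            (ν : Measure ℤ) ≠ empiricalMeasure S n ω} := by
      intro ω hω ν hν heq
      obtain ⟨x, hx⟩ := hKε ν hν
      -- empirical measure of {x} is at most 1/n
      have hℓ : empiricalMeasure S n ω {x} ≤ (n : ℝ≥0∞)⁻¹ := by
        rw [empiricalMeasure, Measure.smul_apply, Measure.finset_sum_apply,
          smul_eq_mul]
        have hsum : ∑ j ∈ Finset.Icc 1 n, Measure.dirac (S j ω) {x} ≤ 1 := by
          set m : ℕ := (x + 1).toNat with hm_def
          calc ∑ j ∈ Finset.Icc 1 n, Measure.dirac (S j ω) {x}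
              ≤ ∑ j ∈ Finset.Icc 1 n, (if j = m then (1 : ℝ≥0∞) else 0) := by
                refine Finset.sum_le_sum fun j hj => ?_
                rw [Measure.dirac_apply' _ (measurableSet_singleton x)]
                simp only [Finset.mem_Icc] at hj
                by_cases h : S j ω ∈ ({x} : Set ℤ)
                · have hSj : S j ω = (j : ℤ) - 1 := hω j hj.1 hj.2
                  have hjx : (j : ℤ) = x + 1 := by
                    have : (j : ℤ) - 1 = x := by rw [← hSj]; exact h
                    omega
                  have hjm : j = m := by
                    rw [hm_def, ← hjx, Int.toNat_natCast]
                  rw [if_pos hjm, Set.indicator_apply]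
                  split <;> simp
                · simp [h]
            _ = (if m ∈ Finset.Icc 1 n then (1 : ℝ≥0∞) else 0) :=
                Finset.sum_ite_eq' _ _ _
            _ ≤ 1 := by split <;> simp
        calc (n : ℝ≥0∞)⁻¹ * ∑ j ∈ Finset.Icc 1 n, Measure.dirac (S j ω) {x}
            ≤ (n : ℝ≥0∞)⁻¹ * 1 := by gcongr
          _ = (n : ℝ≥0∞)⁻¹ := mul_one _
      -- ν has more mass on {x}
      have hνx : (ε : ℝ≥0∞) < (ν : Measure ℤ) {x} := by
        rw [← ProbabilityMeasure.ennreal_coeFn_eq_coeFn_toMeasure]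
        exact_mod_cast hx
      have hnε : (n : ℝ≥0∞)⁻¹ < (ε : ℝ≥0∞) := by
        have h1 : ε⁻¹ < (n : ℝ≥0) := lt_of_lt_of_le hN (by exact_mod_cast hn.trans' (Nat.le_succ N))
        have h2 : (n : ℝ≥0)⁻¹ < ε := by
          have hεinv : (0 : ℝ≥0) < ε⁻¹ := by positivity
          calc (n : ℝ≥0)⁻¹ < (ε⁻¹)⁻¹ := by
                exact inv_strictAnti₀ hεinv h1
            _ = ε := inv_inv ε
        calc (n : ℝ≥0∞)⁻¹ = (((n : ℝ≥0)⁻¹ : ℝ≥0) : ℝ≥0∞) := by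
              rw [ENNReal.coe_inv (Nat.cast_ne_zero.mpr (by omega) : (n : ℝ≥0) ≠ 0)]
              norm_cast
          _ < (ε : ℝ≥0∞) := by exact_mod_cast h2
      rw [heq] at hνx
      exact absurd (hνx.trans_le hℓ) (by simp [hnε.le]) -- contradiction
    have hP : ENNReal.ofReal (∏ j ∈ Finset.Ico 1 n, p ((j : ℤ) - 1))
        ≤ P {ω | ∀ ν : ProbabilityMeasure ℤ, ν ∈ K →
            (ν : Measure ℤ) ≠ empiricalMeasure S n ω} := by
      rw [← hprob]; exact measure_mono hsub
    have hprodpos : 0 < ∏ j ∈ Finset.Ico 1 n, p ((j : ℤ) - 1) :=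
      Finset.prod_pos fun j _ => (hp _).1
    have hPt : ∏ j ∈ Finset.Ico 1 n, p ((j : ℤ) - 1)
        ≤ (P {ω | ∀ ν : ProbabilityMeasure ℤ, ν ∈ K →
            (ν : Measure ℤ) ≠ empiricalMeasure S n ω}).toReal := by
      have h1 : P {ω | ∀ ν : ProbabilityMeasure ℤ, ν ∈ K →
            (ν : Measure ℤ) ≠ empiricalMeasure S n ω} ≠ ⊤ := measure_ne_top P _
      calc ∏ j ∈ Finset.Ico 1 n, p ((j : ℤ) - 1)
          = (ENNReal.ofReal (∏ j ∈ Finset.Ico 1 n, p ((j : ℤ) - 1))).toReal :=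
            (ENNReal.toReal_ofReal hprodpos.le).symm
        _ ≤ _ := ENNReal.toReal_mono h1 hP
    have hlog : ∑ j ∈ Finset.Ico 1 n, u j
        ≤ Real.log (P {ω | ∀ ν : ProbabilityMeasure ℤ, ν ∈ K →
            (ν : Measure ℤ) ≠ empiricalMeasure S n ω}).toReal := by
      rw [hu_def, ← Real.log_prod (s := Finset.Ico 1 n) (f := fun j : ℕ => p ((j : ℤ) - 1)) (fun j _ => ne_of_gt (hp _).1)]
      exact Real.log_le_log hprodpos hPt
    simp only [hg_def, hf_def]
    exact mul_le_mul_of_nonneg_left hlog (by positivity)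
  -- conclude via liminf
  have hflee : ∀ᶠ n in atTop, g n ≤ f n := eventually_atTop.mpr ⟨N + 1, hbound⟩
  have hfle0 : ∀ n : ℕ, f n ≤ 0 := by
    intro n
    have h1 : Real.log (P {ω | ∀ ν : ProbabilityMeasure ℤ, ν ∈ K →
        (ν : Measure ℤ) ≠ empiricalMeasure S n ω}).toReal ≤ 0 :=
      Real.log_nonpos ENNReal.toReal_nonneg
        (by
          have := prob_le_one (μ := P)
            (s := {ω | ∀ ν : ProbabilityMeasure ℤ, ν ∈ K →
              (ν : Measure ℤ) ≠ empiricalMeasure S n ω})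
          exact ENNReal.toReal_le_of_le_ofReal one_pos.le (by simpa using this))
    have h2 : (0 : ℝ) ≤ 1 / (n : ℝ) := by positivity
    exact mul_nonpos_of_nonneg_of_nonpos h2 h1
  calc Real.log pplus = atTop.liminf g := hg.liminf_eq.symm
    _ ≤ atTop.liminf f :=
        liminf_le_liminf hflee hg.isBoundedUnder_ge
          ((isBoundedUnder_of ⟨0, hfle0⟩ :
            IsBoundedUnder (· ≤ ·) atTop f).isCoboundedUnder_ge)
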